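/- (Generalized Jung theorem) Let S ⊆ ℝ² be bounded with diam(S) = δ and 3-diameter diam₃(S) = τ ≤ δ. Then S is contained in a closed disk of radius ρ = δ²/(2·√(δ² − τ²/4)). -/

import Mathlib

open Metric Real

open scoped RealInnerProductSpace

noncomputable def diam₃ (S : Set (EuclideanSpace ℝ (Fin 2))) : ℝ :=
  sSup {x : ℝ | ∃ p ∈ S, ∃ q ∈ S, ∃ r ∈ S,
    x = min (dist p q) (min (dist q r) (dist p r))}

private lemma gj_normsq {E : Type*} [NormedAddCommGroup E] [InnerProductSpace ℝ E]
    (u w : E) (α β : ℝ) :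
    ‖α • u + β • w‖^2 = α^2*‖u‖^2 + 2*(α*β)*⟪u, w⟫ + β^2*‖w‖^2 := by
  rw [norm_add_sq_real, real_inner_smul_left, real_inner_smul_right, norm_smul, norm_smul]
  simp [mul_pow, sq_abs]
  ring

private lemma gj_keynum (δ τ ρ a d x s : ℝ) (hδ : 0 < δ)
    (ha0 : 0 ≤ a) (haτ : a ≤ τ) (hτ0 : 0 ≤ τ)
    (hρ0 : 0 < ρ) (hρsq : ρ^2*(4*(δ^2 - τ^2/4)) = δ^4)
    (hx : d^2 + x + a^2/4 ≤ δ^2) (hd : ρ < d) (hs : s * d = d - ρ) (hs0 : 0 ≤ s) :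
    a^2/4 + s*x + s^2*d^2 ≤ ρ^2 := by
  have hd0 : 0 < d := lt_trans hρ0 hd
  have h4 : 4*ρ^2*(δ^2 - a^2/4) ≥ δ^4 := by
    nlinarith [mul_nonneg (sq_nonneg ρ) (mul_nonneg (sub_nonneg.2 haτ) (by linarith : (0:ℝ) ≤ τ + a))]
  have h1 : 0 ≤ ρ*d^2 - δ^2*d + ρ*(δ^2 - a^2/4) := by
    nlinarith [sq_nonneg (2*ρ*d - δ^2)]
  have hx' : x ≤ δ^2 - a^2/4 - d^2 := by linarith
  have hdρ : (0:ℝ) ≤ d - ρ := by linarith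
  have h2 : (d - ρ)*x ≤ (d-ρ)*(δ^2 - a^2/4 - d^2) := mul_le_mul_of_nonneg_left hx' hdρ
  have e1 : (a^2/4 + s*x + s^2*d^2)*d = (a^2/4)*d + ((s*d))*x + ((s*d))^2*d := by ring
  rw [hs] at e1
  have hgoal' : (a^2/4 + s*x + s^2*d^2)*d ≤ ρ^2*d := by
    rw [e1]; nlinarith [h1, h2]
  exact le_of_mul_le_mul_right (by linarith) hd0

set_option maxHeartbeats 2000000 in
private lemma gj_key2 (δ τ ρ : ℝ) (hδ : 0 < δ) (hτ0 : 0 ≤ τ) (hτδ : τ ≤ δ) (hρ0 : 0 < ρ)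
    (hρsq : ρ^2*(4*(δ^2 - τ^2/4)) = δ^4)
    (p q r : EuclideanSpace ℝ (Fin 2)) (hpq : dist p q ≤ τ)
    (hpr : dist p r ≤ δ) (hqr : dist q r ≤ δ) :
    ∃ c, dist p c ≤ ρ ∧ dist q c ≤ ρ ∧ dist r c ≤ ρ := by
  have hρhalf : δ/2 ≤ ρ := by
    have h4 : 4*ρ^2 ≥ δ^2 := by
      nlinarith [hρsq, mul_pos hδ hδ, mul_nonneg (sq_nonneg ρ) (sq_nonneg τ)]
    nlinarith [hρ0, hδ]
  obtain ⟨u, hu⟩ : ∃ v : EuclideanSpace ℝ (Fin 2), v = q - p := ⟨_, rfl⟩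
  obtain ⟨w, hw⟩ : ∃ v : EuclideanSpace ℝ (Fin 2), v = r - p - (2:ℝ)⁻¹ • u := ⟨_, rfl⟩
  obtain ⟨a, hA⟩ : ∃ t : ℝ, t = ‖u‖ := ⟨_, rfl⟩
  obtain ⟨d, hD⟩ : ∃ t : ℝ, t = ‖w‖ := ⟨_, rfl⟩
  obtain ⟨x, hX⟩ : ∃ t : ℝ, t = ⟪u, w⟫ := ⟨_, rfl⟩
  have ha0 : 0 ≤ a := by rw [hA]; exact norm_nonneg _
  have hd0 : 0 ≤ d := by rw [hD]; exact norm_nonneg _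
  have haτ : a ≤ τ := by rw [hA, hu]; rwa [dist_eq_norm'] at hpq
  -- constraints from hpr, hqr
  have hrp : r - p = (2:ℝ)⁻¹ • u + (1:ℝ) • w := by rw [hu] at hw; rw [hw, hu]; module
  have hrq : r - q = (-(2:ℝ)⁻¹) • u + (1:ℝ) • w := by rw [hu] at hw; rw [hw, hu]; module
  have hprsq : d^2 + x + a^2/4 ≤ δ^2 := by
    have h : ‖r - p‖^2 ≤ δ^2 := by
      rw [← dist_eq_norm']; exact pow_le_pow_left₀ dist_nonneg hpr 2
    rw [hrp, gj_normsq, ← hA, ← hD, ← hX] at h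
    nlinarith [h]
  have hqrsq : d^2 + (-x) + a^2/4 ≤ δ^2 := by
    have h : ‖r - q‖^2 ≤ δ^2 := by
      rw [← dist_eq_norm']; exact pow_le_pow_left₀ dist_nonneg hqr 2
    rw [hrq, gj_normsq, ← hA, ← hD, ← hX] at h
    nlinarith [h]
  by_cases hcase : d ≤ ρ
  · -- center at midpoint of p q
    refine ⟨p + (2:ℝ)⁻¹ • u, ?_, ?_, ?_⟩
    · have e : (p + (2:ℝ)⁻¹ • u) - p = (2:ℝ)⁻¹ • u := by module
      rw [dist_eq_norm', e, norm_smul]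
      simp only [norm_inv, Real.norm_ofNat]
      rw [← hA]; linarith
    · have e : (p + (2:ℝ)⁻¹ • u) - q = (-(2:ℝ)⁻¹) • u := by rw [hu]; module
      rw [dist_eq_norm', e, norm_smul]
      simp only [norm_neg, norm_inv, Real.norm_ofNat]
      rw [← hA]; linarith
    · have e : (p + (2:ℝ)⁻¹ • u) - r = -w := by rw [hu] at hw; rw [hw, hu]; module
      rw [dist_eq_norm', e, norm_neg, ← hD]; exact hcase
  · push_neg at hcase
    have hdpos : 0 < d := lt_trans hρ0 hcase
    obtain ⟨s, hs_def⟩ : ∃ t : ℝ, t = (d - ρ)/d := ⟨_, rfl⟩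
    have hs : s * d = d - ρ := by rw [hs_def]; field_simp
    have hs0 : 0 ≤ s := by rw [hs_def]; exact div_nonneg (by linarith) (le_of_lt hdpos)
    have hs1 : 1 - s = ρ/d := by
      rw [hs_def, eq_div_iff (ne_of_gt hdpos)]; field_simp; ring
    refine ⟨p + (2:ℝ)⁻¹ • u + s • w, ?_, ?_, ?_⟩
    · have e : (p + (2:ℝ)⁻¹ • u + s • w) - p = (2:ℝ)⁻¹ • u + s • w := by module
      have hsq : ‖(2:ℝ)⁻¹ • u + s • w‖^2 ≤ ρ^2 := by
        rw [gj_normsq, ← hA, ← hD, ← hX]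
        have h := gj_keynum δ τ ρ a d x s hδ ha0 haτ hτ0 hρ0 hρsq hprsq hcase hs hs0
        nlinarith [h]
      rw [dist_eq_norm', e]
      nlinarith [norm_nonneg ((2:ℝ)⁻¹ • u + s • w), hρ0, hsq]
    · have e : (p + (2:ℝ)⁻¹ • u + s • w) - q = (-(2:ℝ)⁻¹) • u + s • w := by
        rw [hu]; module
      have hsq : ‖(-(2:ℝ)⁻¹) • u + s • w‖^2 ≤ ρ^2 := by
        rw [gj_normsq, ← hA, ← hD, ← hX]
        have h := gj_keynum δ τ ρ a d (-x) s hδ ha0 haτ hτ0 hρ0 hρsq hqrsq hcase hs hs0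
        nlinarith [h]
      rw [dist_eq_norm', e]
      nlinarith [norm_nonneg ((-(2:ℝ)⁻¹) • u + s • w), hρ0, hsq]
    · have e : r - (p + (2:ℝ)⁻¹ • u + s • w) = (1 - s) • w := by
        rw [hu] at hw; rw [hw, hu]; module
      rw [dist_eq_norm, e, norm_smul, ← hD, hs1]
      have habs : ‖ρ/d‖ = ρ/d := by
        rw [Real.norm_eq_abs]
        exact abs_of_nonneg (div_nonneg (le_of_lt hρ0) (le_of_lt hdpos))
      rw [habs, div_mul_eq_mul_div, mul_div_assoc, div_self (ne_of_gt hdpos), mul_one]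

private lemma gj_key3 (δ τ ρ : ℝ) (hδ : 0 < δ) (hτ0 : 0 ≤ τ) (hτδ : τ ≤ δ) (hρ0 : 0 < ρ)
    (hρsq : ρ^2*(4*(δ^2 - τ^2/4)) = δ^4)
    (p q r : EuclideanSpace ℝ (Fin 2))
    (hpq : dist p q ≤ δ) (hpr : dist p r ≤ δ) (hqr : dist q r ≤ δ)
    (hmin : min (dist p q) (min (dist q r) (dist p r)) ≤ τ) :
    ∃ c, dist p c ≤ ρ ∧ dist q c ≤ ρ ∧ dist r c ≤ ρ := by
  rw [min_le_iff, min_le_iff] at hmin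
  rcases hmin with h | h | h
  · exact gj_key2 δ τ ρ hδ hτ0 hτδ hρ0 hρsq p q r h hpr hqr
  · obtain ⟨c, h1, h2, h3⟩ := gj_key2 δ τ ρ hδ hτ0 hτδ hρ0 hρsq q r p h
      (by rwa [dist_comm]) (by rwa [dist_comm])
    exact ⟨c, h3, h1, h2⟩
  · obtain ⟨c, h1, h2, h3⟩ := gj_key2 δ τ ρ hδ hτ0 hτδ hρ0 hρsq p r q h hpq
      (by rwa [dist_comm])
    exact ⟨c, h1, h3, h2⟩

private lemma gj_cover3 {α : Type*} [DecidableEq α] (I : Finset α) (h : I.card ≤ 3)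
    (hne : I.Nonempty) :
    ∃ a b c, a ∈ I ∧ b ∈ I ∧ c ∈ I ∧ ∀ x ∈ I, x = a ∨ x = b ∨ x = c := by
  have h1 : 1 ≤ I.card := Finset.card_pos.mpr hne
  interval_cases hc : I.card
  · obtain ⟨a, ha⟩ := Finset.card_eq_one.mp hc
    exact ⟨a, a, a, by simp [ha], by simp [ha], by simp [ha], by simp [ha]⟩
  · obtain ⟨a, b, _, hab⟩ := Finset.card_eq_two.mp hc
    refine ⟨a, b, b, by simp [hab], by simp [hab], by simp [hab], ?_⟩
    intro x hx
    simp [hab] at hx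
    tauto
  · obtain ⟨a, b, c, _, _, _, habc⟩ := Finset.card_eq_three.mp hc
    refine ⟨a, b, c, by simp [habc], by simp [habc], by simp [habc], ?_⟩
    intro x hx
    simp [habc] at hx
    tauto

theorem generalized_jung (S : Set (EuclideanSpace ℝ (Fin 2))) (δ τ : ℝ)
    (hb : Bornology.IsBounded S) (hdiam : Metric.diam S = δ)
    (hdiam3 : diam₃ S = τ) (hτδ : τ ≤ δ) :
    ∃ c : EuclideanSpace ℝ (Fin 2),
      S ⊆ Metric.closedBall c (δ ^ 2 / (2 * Real.sqrt (δ ^ 2 - τ ^ 2 / 4))) := by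
  classical
  rcases S.eq_empty_or_nonempty with hS | ⟨s0, hs0⟩
  · exact ⟨0, by simp [hS]⟩
  -- basic facts
  have hdist : ∀ p ∈ S, ∀ q ∈ S, dist p q ≤ δ := fun p hp q hq =>
    hdiam ▸ dist_le_diam_of_mem hb hp hq
  have hδ0 : 0 ≤ δ := hdiam ▸ diam_nonneg
  have hbdd : BddAbove {x : ℝ | ∃ p ∈ S, ∃ q ∈ S, ∃ r ∈ S,
      x = min (dist p q) (min (dist q r) (dist p r))} := by
    refine ⟨δ, fun x hx => ?_⟩
    obtain ⟨p, hp, q, hq, r, hr, rfl⟩ := hx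
    exact le_trans (min_le_left _ _) (hdist p hp q hq)
  have hτ0 : 0 ≤ τ := by
    rw [← hdiam3]
    apply le_csSup hbdd
    exact ⟨s0, hs0, s0, hs0, s0, hs0, by simp⟩
  have hmin3 : ∀ p ∈ S, ∀ q ∈ S, ∀ r ∈ S,
      min (dist p q) (min (dist q r) (dist p r)) ≤ τ := by
    intro p hp q hq r hr
    rw [← hdiam3]
    exact le_csSup hbdd ⟨p, hp, q, hq, r, hr, rfl⟩
  rcases eq_or_lt_of_le hδ0 with hδz | hδpos
  · -- δ = 0 : trivial case
    refine ⟨s0, fun p hp => ?_⟩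
    rw [mem_closedBall]
    have h1 : dist p s0 ≤ 0 := by rw [hδz]; exact hdist p hp s0 hs0
    have h2 : (0:ℝ) ≤ δ ^ 2 / (2 * Real.sqrt (δ ^ 2 - τ ^ 2 / 4)) := by
      apply div_nonneg (sq_nonneg _)
      positivity
    linarith
  -- main case
  set k : ℝ := δ^2 - τ^2/4 with hk_def
  have hk0 : 0 < k := by rw [hk_def]; nlinarith [mul_self_le_mul_self hτ0 hτδ, mul_pos hδpos hδpos]
  set ρ : ℝ := δ ^ 2 / (2 * Real.sqrt (δ ^ 2 - τ ^ 2 / 4)) with hρ_def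
  have hsk : Real.sqrt (δ ^ 2 - τ ^ 2 / 4) ^ 2 = k := Real.sq_sqrt (le_of_lt hk0)
  have hskpos : 0 < Real.sqrt (δ ^ 2 - τ ^ 2 / 4) := Real.sqrt_pos.mpr hk0
  have hρ0 : 0 < ρ := by
    apply div_pos (by positivity) (by positivity)
  have hρsq : ρ^2*(4*(δ^2 - τ^2/4)) = δ^4 := by
    rw [hρ_def, div_pow, mul_pow]
    rw [← hk_def]  -- express in terms of k
    field_simp
    nlinarith [hsk]
  -- Helly
  have hHelly : (⋂ i : S, Metric.closedBall (i : EuclideanSpace ℝ (Fin 2)) ρ).Nonempty := by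
    apply Convex.helly_theorem_compact' (𝕜 := ℝ)
    · intro i; exact convex_closedBall _ _
    · intro i; exact isCompact_closedBall _ _
    · intro I hI
      rw [finrank_euclideanSpace_fin] at hI
      rcases I.eq_empty_or_nonempty with hIe | hIne
      · simp [hIe]
      obtain ⟨i1, i2, i3, hi1, hi2, hi3, hcov⟩ := gj_cover3 I hI hIne
      obtain ⟨c, hc1, hc2, hc3⟩ := gj_key3 δ τ ρ hδpos hτ0 hτδ hρ0 hρsq i1 i2 i3
        (hdist _ i1.2 _ i2.2) (hdist _ i1.2 _ i3.2) (hdist _ i2.2 _ i3.2)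
        (hmin3 _ i1.2 _ i2.2 _ i3.2)
      refine ⟨c, ?_⟩
      rw [Set.mem_iInter₂]
      intro i hi
      rcases hcov i hi with rfl | rfl | rfl
      · exact mem_closedBall'.mpr hc1
      · exact mem_closedBall'.mpr hc2
      · exact mem_closedBall'.mpr hc3
  obtain ⟨c, hc⟩ := hHelly
  refine ⟨c, fun p hp => ?_⟩
  have := Set.mem_iInter.mp hc ⟨p, hp⟩
  rw [mem_closedBall] at this ⊢
  rwa [dist_comm]
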